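/- Peierls convergence: Let c > 0 and for γ ∈ (0,1) set ψ(γ) = e^{-(c/8)γ^{-1/2}}. Then for all sufficiently small γ > 0, (1+ψ)^8 e^{-(c/2)γ^{-1/2}} 3^{γ^{-1/4}} + ∑_{n≥1} 4n (1+ψ)^{2n+8} e^{-n c γ^{2}} e^{-(c/4)γ^{-1/2}} < ψ(γ). -/

import Mathlib

open Filter Real Topology

set_option maxHeartbeats 1600000 in
/-- Peierls convergence: with ψ(γ) = e^{-(c/8)γ^{-1/2}}, for all sufficiently
small γ > 0,
(1+ψ)^8 e^{-(c/2)γ^{-1/2}} 3^{γ^{-1/4}}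
  + ∑_{n≥1} 4n (1+ψ)^{2n+8} e^{-n c γ²} e^{-(c/4)γ^{-1/2}} < ψ(γ). -/
theorem peierls_self_consistency (c : ℝ) (hc : 0 < c) :
    ∃ γ₀ > (0 : ℝ), ∀ γ : ℝ, 0 < γ → γ < γ₀ →
      (1 + Real.exp (-(c / 8) * γ ^ (-(1 : ℝ) / 2))) ^ 8 *
          Real.exp (-(c / 2) * γ ^ (-(1 : ℝ) / 2)) *
          (3 : ℝ) ^ (γ ^ (-(1 : ℝ) / 4)) +
        (∑' n : ℕ, 4 * (n : ℝ) *
          (1 + Real.exp (-(c / 8) * γ ^ (-(1 : ℝ) / 2))) ^ (2 * n + 8) *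
          Real.exp (-(n : ℝ) * c * γ ^ 2) *
          Real.exp (-(c / 4) * γ ^ (-(1 : ℝ) / 2))) <
      Real.exp (-(c / 8) * γ ^ (-(1 : ℝ) / 2)) := by
  -- Helper: any polynomial is eventually beaten by exp((c/8)x)
  have hE : ∀ (K : ℝ) (n : ℕ), ∀ᶠ x : ℝ in atTop,
      K * x ^ n < Real.exp (c / 8 * x) := by
    intro K n
    have h1 : Tendsto (fun x : ℝ => c / 8 * x) atTop atTop :=
      Tendsto.const_mul_atTop (by positivity) tendsto_id
    have h2 := (Real.tendsto_exp_div_pow_atTop n).comp h1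
    have h3 := h2.eventually_ge_atTop (|K| * (8 / c) ^ n + 1)
    filter_upwards [h3, eventually_gt_atTop 0] with x hx hx0
    have hcx : 0 < c / 8 * x := by positivity
    have hxn : (0:ℝ) < (c / 8 * x) ^ n := by positivity
    have h4 : (|K| * (8 / c) ^ n + 1) * (c / 8 * x) ^ n ≤ Real.exp (c / 8 * x) := by
      simp only [Function.comp] at hx
      rw [le_div_iff₀ hxn] at hx
      exact hx
    have h5 : (8 / c) ^ n * (c / 8) ^ n = 1 := by
      rw [← mul_pow]
      field_simp
      exact one_pow n
    have h6 : (|K| * (8 / c) ^ n + 1) * (c / 8 * x) ^ n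
        = (|K| + (c/8)^n) * x ^ n := by
      rw [mul_pow]
      linear_combination (|K| * x ^ n) * h5
    have h7 : K * x ^ n < (|K| + (c/8)^n) * x ^ n := by
      have hxp : (0:ℝ) < x ^ n := by positivity
      have hK : K < |K| + (c/8)^n := by
        have h8 : (0:ℝ) < (c/8)^n := by positivity
        linarith [le_abs_self K]
      exact mul_lt_mul_of_pos_right hK hxp
    rw [h6] at h4
    exact lt_of_lt_of_le h7 h4
  -- eventual conditions in x
  have hP2 : ∀ᶠ x : ℝ in atTop,
      x ^ ((1:ℝ)/2) * Real.log 3 ≤ c / 8 * x := by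
    have hs := (tendsto_rpow_atTop (by norm_num : (0:ℝ) < 1/2)).eventually_ge_atTop
      (8 * Real.log 3 / c)
    filter_upwards [hs, eventually_gt_atTop 0] with x hx hx0
    have hxx : x ^ ((1:ℝ)/2) * x ^ ((1:ℝ)/2) = x := by
      rw [← Real.rpow_add hx0]; norm_num
    have h0 : (0:ℝ) ≤ x ^ ((1:ℝ)/2) := Real.rpow_nonneg hx0.le _
    have hlog : (0:ℝ) ≤ Real.log 3 := Real.log_nonneg (by norm_num)
    have hl : Real.log 3 ≤ c / 8 * x ^ ((1:ℝ)/2) := by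
      rw [div_le_iff₀ hc] at hx
      nlinarith
    nlinarith [mul_le_mul_of_nonneg_left hl h0]
  have hP3 : ∀ᶠ x : ℝ in atTop,
      Real.exp (-(c / 8) * x) ≤ c / 4 * (x ^ 4)⁻¹ := by
    filter_upwards [hE (4/c) 4, eventually_gt_atTop 0] with x hx hx0
    have hx4 : (0:ℝ) < 4 / c * x ^ 4 := by positivity
    have h1 : Real.exp (-(c / 8) * x) ≤ (4 / c * x ^ 4)⁻¹ := by
      rw [show -(c/8) * x = -(c/8*x) by ring, Real.exp_neg]
      exact inv_anti₀ hx4 hx.le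
    have h2 : (4 / c * x ^ 4)⁻¹ = c / 4 * (x ^ 4)⁻¹ := by
      rw [mul_inv]
      congr 1
      rw [inv_div]
    linarith [h2 ▸ h1]
  have hP4 : ∀ᶠ x : ℝ in atTop, c / 2 * (x ^ 4)⁻¹ ≤ 1 := by
    filter_upwards [eventually_ge_atTop (max 1 c)] with x hx
    have hx1 : (1:ℝ) ≤ x := le_trans (le_max_left _ _) hx
    have hxc : c ≤ x := le_trans (le_max_right _ _) hx
    have hx4 : x ≤ x ^ 4 := le_self_pow₀ hx1 (by norm_num)
    have h4 : c / 2 ≤ x ^ 4 := by linarith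
    have hx40 : (0:ℝ) < x ^ 4 := by positivity
    rw [mul_inv_le_iff₀ hx40]
    linarith
  have hP5 : ∀ᶠ x : ℝ in atTop,
      16384 / c ^ 2 * x ^ 8 * Real.exp (-(c / 8) * x) < 1 / 2 := by
    filter_upwards [hE (32768 / c^2) 8, eventually_gt_atTop 0] with x hx hx0
    have hxp : (0:ℝ) < x ^ 8 := by positivity
    have he : (0:ℝ) < Real.exp (c / 8 * x) := Real.exp_pos _
    have hkey : Real.exp (-(c / 8) * x) * Real.exp (c / 8 * x) = 1 := by
      rw [← Real.exp_add]; norm_num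
    have h2 := mul_lt_mul_of_pos_right hx (Real.exp_pos (-(c / 8) * x))
    rw [show Real.exp (c/8*x) * Real.exp (-(c/8)*x) = 1 by
      rw [← Real.exp_add, show c/8*x + -(c/8)*x = 0 by ring, Real.exp_zero]] at h2
    have hc2 : (0:ℝ) < c ^ 2 := by positivity
    rw [div_mul_eq_mul_div, div_mul_eq_mul_div, div_lt_iff₀ hc2] at h2 ⊢
    linarith
  have hP6 : ∀ᶠ x : ℝ in atTop, (512:ℝ) < Real.exp (c / 4 * x) := by
    filter_upwards [hE 512 0, eventually_gt_atTop 0] with x hx hx0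
    have : Real.exp (c / 8 * x) ≤ Real.exp (c / 4 * x) := by
      apply Real.exp_le_exp.mpr; nlinarith
    simpa using lt_of_lt_of_le (by simpa using hx) this
  have hP1 : ∀ᶠ x : ℝ in atTop, Real.exp (-(c / 8) * x) ≤ 1 := by
    filter_upwards [eventually_ge_atTop 0] with x hx
    rw [Real.exp_le_one_iff]
    nlinarith
  have hP := hP1.and (hP2.and (hP3.and (hP4.and (hP5.and hP6))))
  -- pull back along γ ↦ γ^{-1/2}
  have hxt : Tendsto (fun γ : ℝ => γ ^ (-(1:ℝ)/2)) (𝓝[>] (0:ℝ)) atTop := by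
    have h1 : Tendsto (fun γ : ℝ => γ⁻¹) (𝓝[>] (0:ℝ)) atTop := tendsto_inv_nhdsGT_zero
    have h2 := (tendsto_rpow_atTop (by norm_num : (0:ℝ) < 1/2)).comp h1
    apply h2.congr'
    filter_upwards [self_mem_nhdsWithin] with γ (hγ : γ ∈ Set.Ioi (0:ℝ))
    simp only [Function.comp]
    rw [← Real.rpow_neg_one γ, ← Real.rpow_mul hγ.out.le]
    norm_num
  have hG := hxt.eventually hP
  rw [eventually_iff] at hG
  obtain ⟨u, hu, hsub⟩ := mem_nhdsGT_iff_exists_Ioo_subset.mp hG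
  refine ⟨u, hu, ?_⟩
  intro γ hγ0 hγu
  obtain ⟨Q1, Q2, Q3, Q4, Q5, Q6⟩ := hsub ⟨hγ0, hγu⟩
  set x := γ ^ (-(1:ℝ)/2) with hxdef
  have hx0 : 0 < x := Real.rpow_pos_of_pos hγ0 _
  set ψ := Real.exp (-(c/8) * x) with hψdef
  have hψ0 : 0 < ψ := Real.exp_pos _
  -- γ^2 = (x^4)⁻¹
  have hg2 : γ ^ 2 = (x ^ 4)⁻¹ := by
    rw [hxdef, ← Real.rpow_natCast (γ ^ (-(1:ℝ)/2)) 4, ← Real.rpow_mul hγ0.le]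
    rw [show (-(1:ℝ)/2 * (4:ℕ)) = (-2 : ℝ) by push_cast; ring]
    rw [show (-2:ℝ) = -(2:ℕ) by push_cast; ring, Real.rpow_neg hγ0.le,
      Real.rpow_natCast, inv_inv]
  -- γ^{-1/4} = x^{1/2}
  have hq : γ ^ (-(1:ℝ)/4) = x ^ ((1:ℝ)/2) := by
    rw [hxdef, ← Real.rpow_mul hγ0.le]
    norm_num
  set p := 1 + ψ with hpdef
  clear_value x ψ p
  have hg20 : 0 < γ ^ 2 := by positivity
  have hp1 : (1:ℝ) ≤ p := by rw [hpdef]; linarith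
  have hp2 : p ≤ 2 := by rw [hpdef]; linarith
  have hp0 : (0:ℝ) ≤ p := by linarith
  have hp8 : p ^ 8 ≤ 256 := by
    calc p ^ 8 ≤ 2 ^ 8 := pow_le_pow_left₀ hp0 hp2 8
    _ = 256 := by norm_num
  -- Part 1
  have hT1 : p ^ 8 * Real.exp (-(c / 2) * x) *
      (3 : ℝ) ^ (γ ^ (-(1 : ℝ) / 4)) < ψ / 2 := by
    rw [hq, Real.rpow_def_of_pos (by norm_num : (0:ℝ) < 3)]
    have h1 : Real.exp (-(c / 2) * x) * Real.exp (Real.log 3 * x ^ ((1:ℝ)/2))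
        ≤ Real.exp (-(3 * c / 8) * x) := by
      rw [← Real.exp_add]
      apply Real.exp_le_exp.mpr
      nlinarith [Q2]
    have h2 : Real.exp (-(3 * c / 8) * x) * Real.exp (c / 4 * x) = ψ := by
      rw [hψdef, ← Real.exp_add]; ring_nf
    have he3 : (0:ℝ) < Real.exp (-(3 * c / 8) * x) := Real.exp_pos _
    have hexp2 : (0:ℝ) < Real.exp (-(c / 2) * x) := Real.exp_pos _
    have hexp3 : (0:ℝ) < Real.exp (Real.log 3 * x ^ ((1:ℝ)/2)) := Real.exp_pos _
    calc p ^ 8 * Real.exp (-(c / 2) * x) * Real.exp (Real.log 3 * x ^ ((1:ℝ)/2))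
        ≤ 256 * Real.exp (-(3 * c / 8) * x) := by
          nlinarith [mul_le_mul hp8 h1 (by positivity) (by norm_num : (0:ℝ) ≤ 256)]
      _ < ψ / 2 := by nlinarith [mul_lt_mul_of_pos_left Q6 he3, h2]
  -- Part 2 : the series
  set r := p ^ 2 * Real.exp (-(c * γ ^ 2)) with hrdef
  have hr0 : (0:ℝ) ≤ r := by rw [hrdef]; positivity
  clear_value r
  have hψsmall : ψ ≤ c * γ ^ 2 / 4 := by
    have h := Q3
    rw [← hg2] at h
    linarith
  have hrle : r ≤ Real.exp (-(c * γ ^ 2 / 2)) := by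
    have h1 : p ≤ Real.exp ψ := by
      rw [hpdef]; linarith [Real.add_one_le_exp ψ]
    have h2 : p ^ 2 ≤ Real.exp (2 * ψ) := by
      calc p ^ 2 ≤ Real.exp ψ ^ 2 := pow_le_pow_left₀ hp0 h1 2
        _ = Real.exp (2 * ψ) := by rw [sq, ← Real.exp_add, two_mul]
    calc r = p ^ 2 * Real.exp (-(c * γ ^ 2)) := hrdef
      _ ≤ Real.exp (2 * ψ) * Real.exp (-(c * γ ^ 2)) :=
          mul_le_mul_of_nonneg_right h2 (Real.exp_pos _).le
      _ = Real.exp (2 * ψ - c * γ ^ 2) := by rw [← Real.exp_add]; ring_nf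
      _ ≤ Real.exp (-(c * γ ^ 2 / 2)) := by
          apply Real.exp_le_exp.mpr; linarith
  have hrlt : r < 1 := by
    apply lt_of_le_of_lt hrle
    rw [Real.exp_lt_one_iff]
    nlinarith
  have h1r : c / 4 * γ ^ 2 ≤ 1 - r := by
    have ht0 : 0 < c * γ ^ 2 / 2 := by positivity
    set t := c * γ ^ 2 / 2 with htdef
    clear_value t
    have ht1 : t ≤ 1 := by
      have h := Q4; rw [← hg2] at h
      rw [htdef]; linarith
    have hte : (1 + t) * Real.exp (-t) ≤ 1 := by
      have h1 : 1 + t ≤ Real.exp t := by linarith [Real.add_one_le_exp t]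
      have h2 : Real.exp t * Real.exp (-t) = 1 := by
        rw [← Real.exp_add]; simp
      nlinarith [Real.exp_pos (-t)]
    have h3 : Real.exp (-t) ≤ 1 - t / 2 := by nlinarith [Real.exp_pos (-t)]
    have h4 : r ≤ 1 - t / 2 := le_trans hrle h3
    have h5 : c / 4 * γ ^ 2 = t / 2 := by rw [htdef]; ring
    linarith [h5 ▸ h4]
  -- rewrite the sum
  have hterm : ∀ n : ℕ, 4 * (n:ℝ) * p ^ (2 * n + 8) * Real.exp (-(n:ℝ) * c * γ ^ 2) *
      Real.exp (-(c/4) * x) = (4 * p ^ 8 * Real.exp (-(c/4) * x)) * ((n:ℝ) * r ^ n) := by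
    intro n
    have h1 : Real.exp (-(n:ℝ) * c * γ ^ 2) = Real.exp (-(c * γ ^ 2)) ^ n := by
      rw [← Real.exp_nat_mul]; ring_nf
    rw [h1, hrdef, mul_pow, pow_add, pow_mul]
    ring
  have hnorm : ‖r‖ < 1 := by rw [Real.norm_eq_abs, abs_of_nonneg hr0]; exact hrlt
  have hsum : (∑' n : ℕ, 4 * (n:ℝ) * p ^ (2 * n + 8) * Real.exp (-(n:ℝ) * c * γ ^ 2) *
      Real.exp (-(c/4) * x)) = (4 * p ^ 8 * Real.exp (-(c/4) * x)) * (r / (1 - r) ^ 2) := by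
    rw [tsum_congr hterm, tsum_mul_left, tsum_coe_mul_geometric_of_norm_lt_one hnorm]
  have hS : (∑' n : ℕ, 4 * (n:ℝ) * p ^ (2 * n + 8) * Real.exp (-(n:ℝ) * c * γ ^ 2) *
      Real.exp (-(c/4) * x)) < ψ / 2 := by
    rw [hsum]
    have hD0 : 0 < c / 4 * γ ^ 2 := by positivity
    set D := c / 4 * γ ^ 2 with hDdef
    clear_value D
    have hD2 : (0:ℝ) < D ^ 2 := by positivity
    have hDle : D ^ 2 ≤ (1 - r) ^ 2 := by nlinarith
    have hfrac : r / (1 - r) ^ 2 ≤ 1 / D ^ 2 :=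
      div_le_div₀ (by norm_num) hrlt.le hD2 hDle
    have hfrac0 : 0 ≤ r / (1 - r) ^ 2 := by
      apply div_nonneg hr0; positivity
    have he4 : (0:ℝ) < Real.exp (-(c/4) * x) := Real.exp_pos _
    have hCle : 4 * p ^ 8 * Real.exp (-(c/4) * x) ≤ 1024 * Real.exp (-(c/4) * x) := by
      nlinarith
    have step1 : (4 * p ^ 8 * Real.exp (-(c/4) * x)) * (r / (1 - r) ^ 2)
        ≤ 1024 * Real.exp (-(c/4) * x) * (1 / D ^ 2) := by
      apply mul_le_mul hCle hfrac hfrac0 (by positivity)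
    have hx80 : (0:ℝ) < x ^ 8 := by positivity
    have hDval : D ^ 2 = c ^ 2 / 16 * (x ^ 8)⁻¹ := by
      rw [hDdef, hg2]
      field_simp
      ring
    have hinvD : 1 / D ^ 2 = 16 / c ^ 2 * x ^ 8 := by
      rw [hDval]
      field_simp
    have hsplit : Real.exp (-(c/4) * x) = Real.exp (-(c/8) * x) * ψ := by
      rw [hψdef, ← Real.exp_add]; ring_nf
    have step2 : 1024 * Real.exp (-(c/4) * x) * (1 / D ^ 2)
        = (16384 / c ^ 2 * x ^ 8 * Real.exp (-(c/8) * x)) * ψ := by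
      rw [hinvD, hsplit]
      ring
    have hQ5' : 16384 / c ^ 2 * x ^ 8 * Real.exp (-(c/8) * x) < 1 / 2 := by
      rw [← hψdef]; exact Q5
    have step3 : (16384 / c ^ 2 * x ^ 8 * Real.exp (-(c/8) * x)) * ψ < (1/2) * ψ :=
      mul_lt_mul_of_pos_right hQ5' hψ0
    calc (4 * p ^ 8 * Real.exp (-(c/4) * x)) * (r / (1 - r) ^ 2)
        ≤ 1024 * Real.exp (-(c/4) * x) * (1 / D ^ 2) := step1
      _ = (16384 / c ^ 2 * x ^ 8 * Real.exp (-(c/8) * x)) * ψ := step2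
      _ < (1/2) * ψ := step3
      _ = ψ / 2 := by ring
  linarith [hT1, hS]
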